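/- Let n, p be positive reals with n/p > Z and define j = log₂(2n/(pZ)). Then Q(n,p,Z) := (n/p)²/Z + ∑_{i=2}^{j} 2^{i-1}·p·(n/(2^{i-1}p))²/Z + ∑_{i=j+1}^{log₂ n} 2^{i-1}·p·(n/(2^{i-1}p)) ≤ C·(n²/(pZ) + n·log₂(pZ)) for an absolute constant C, where the sums range over integers i in the given intervals. -/

import Mathlib

theorem stmt_11 :
    ∃ C : ℝ, 0 < C ∧
      ∀ (n p Z : ℝ) (j : ℕ), 1 ≤ p → 2 ≤ Z → Z < n / p →
        (j : ℝ) = Real.logb 2 (2 * n / (p * Z)) → 2 ≤ j →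
        (n / p) ^ 2 / Z +
            (∑ i ∈ Finset.Icc 2 j,
              2 ^ (i - 1) * p * (n / (2 ^ (i - 1) * p)) ^ 2 / Z) +
            (∑ i ∈ Finset.Icc (j + 1) ⌊Real.logb 2 n⌋₊,
              2 ^ (i - 1) * p * (n / (2 ^ (i - 1) * p))) ≤
          C * (n ^ 2 / (p * Z) + n * Real.logb 2 (p * Z)) := by
  refine ⟨5, by norm_num, ?_⟩
  intro n p Z j hp hZ hZnp hj hj2
  have hp0 : (0:ℝ) < p := lt_of_lt_of_le one_pos hp
  have hZ0 : (0:ℝ) < Z := lt_of_lt_of_le two_pos hZ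
  have hnp : (0:ℝ) < n / p := lt_trans hZ0 hZnp
  have hn0 : (0:ℝ) < n := by
    have := mul_pos hnp hp0
    rwa [div_mul_cancel₀ _ hp0.ne'] at this
  have hn1 : (1:ℝ) < n := by
    have h2np : (2:ℝ) < n / p := lt_of_le_of_lt hZ hZnp
    rw [lt_div_iff₀ hp0] at h2np
    nlinarith
  have hpZ2 : (2:ℝ) ≤ p * Z := le_trans hZ (le_mul_of_one_le_left hZ0.le hp)
  have hlogpZ : (1:ℝ) ≤ Real.logb 2 (p * Z) := by
    have := Real.logb_le_logb_of_le (b := 2) (by norm_num) (by norm_num) hpZ2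
    rwa [Real.logb_self_eq_one (by norm_num)] at this
  -- term 1
  have h1 : (n / p) ^ 2 / Z ≤ n ^ 2 / (p * Z) := by
    rw [div_pow, div_div]
    apply div_le_div_of_nonneg_left (by positivity) (by positivity)
    nlinarith
  -- sum 2
  have h2 : (∑ i ∈ Finset.Icc 2 j,
      2 ^ (i - 1) * p * (n / (2 ^ (i - 1) * p)) ^ 2 / Z) ≤ 4 * (n ^ 2 / (p * Z)) := by
    have heq : ∀ i ∈ Finset.Icc 2 j,
        2 ^ (i - 1) * p * (n / (2 ^ (i - 1) * p)) ^ 2 / Z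
          = n ^ 2 / (p * Z) * (1 / 2 : ℝ) ^ (i - 1) := by
      intro i _
      have h2i : ((2:ℝ) ^ (i - 1)) ≠ 0 := by positivity
      field_simp
      rw [← mul_pow]; norm_num
    rw [Finset.sum_congr rfl heq, ← Finset.mul_sum]
    have hs : (∑ i ∈ Finset.Icc 2 j, (1 / 2 : ℝ) ^ (i - 1)) ≤ 4 := by
      calc (∑ i ∈ Finset.Icc 2 j, (1 / 2 : ℝ) ^ (i - 1))
          ≤ ∑ i ∈ Finset.Icc 2 j, 2 * (1 / 2 : ℝ) ^ i := by
            apply Finset.sum_le_sum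
            intro i hi
            have hi2 : 2 ≤ i := (Finset.mem_Icc.mp hi).1
            obtain ⟨k, rfl⟩ : ∃ k, i = k + 1 := ⟨i - 1, by omega⟩
            have hr : 2 * ((1 / 2 : ℝ) ^ k * (1 / 2)) = (1 / 2) ^ k := by ring
            rw [pow_succ, hr, Nat.add_sub_cancel]
        _ = 2 * ∑ i ∈ Finset.Icc 2 j, (1 / 2 : ℝ) ^ i := by rw [Finset.mul_sum]
        _ ≤ 2 * ∑ i ∈ Finset.range (j + 1), (1 / 2 : ℝ) ^ i := by
            apply mul_le_mul_of_nonneg_left _ (by norm_num)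
            apply Finset.sum_le_sum_of_subset_of_nonneg
            · intro i hi
              simp only [Finset.mem_Icc] at hi
              simp only [Finset.mem_range]
              omega
            · intro i _ _; positivity
        _ ≤ 2 * 2 := by
            apply mul_le_mul_of_nonneg_left (sum_geometric_two_le _) (by norm_num)
        _ = 4 := by norm_num
    have hnp2 : (0:ℝ) ≤ n ^ 2 / (p * Z) := by positivity
    calc n ^ 2 / (p * Z) * (∑ i ∈ Finset.Icc 2 j, (1 / 2 : ℝ) ^ (i - 1))
        ≤ n ^ 2 / (p * Z) * 4 := mul_le_mul_of_nonneg_left hs hnp2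
      _ = 4 * (n ^ 2 / (p * Z)) := by ring
  -- sum 3
  have h3 : (∑ i ∈ Finset.Icc (j + 1) ⌊Real.logb 2 n⌋₊,
      2 ^ (i - 1) * p * (n / (2 ^ (i - 1) * p))) ≤ n * Real.logb 2 (p * Z) := by
    set M := ⌊Real.logb 2 n⌋₊ with hM
    have heq : ∀ i ∈ Finset.Icc (j + 1) M,
        2 ^ (i - 1) * p * (n / (2 ^ (i - 1) * p)) = n := by
      intro i _
      have hc : ((2:ℝ) ^ (i - 1) * p) ≠ 0 := by positivity
      field_simp
    rw [Finset.sum_congr rfl heq, Finset.sum_const, nsmul_eq_mul]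
    have hcard : ((Finset.Icc (j + 1) M).card : ℝ) ≤ Real.logb 2 (p * Z) := by
      rw [Nat.card_Icc]
      by_cases hMj : M ≤ j
      · have hz : M + 1 - (j + 1) = 0 := by omega
        rw [hz]
        simp only [Nat.cast_zero]
        linarith
      · push_neg at hMj
        have hz : M + 1 - (j + 1) = M - j := by omega
        rw [hz, Nat.cast_sub hMj.le]
        have hMle : (M:ℝ) ≤ Real.logb 2 n :=
          Nat.floor_le (Real.logb_nonneg (by norm_num) hn1.le)
        have hjval : (j:ℝ) = 1 + Real.logb 2 n - Real.logb 2 (p * Z) := by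
          rw [hj, Real.logb_div (by positivity) (by positivity),
            Real.logb_mul (by norm_num) hn0.ne',
            Real.logb_self_eq_one (by norm_num)]
        linarith
    calc ((Finset.Icc (j + 1) M).card : ℝ) * n
        ≤ Real.logb 2 (p * Z) * n := mul_le_mul_of_nonneg_right hcard hn0.le
      _ = n * Real.logb 2 (p * Z) := mul_comm _ _
  have hA : (0:ℝ) ≤ n * Real.logb 2 (p * Z) := by
    have : (0:ℝ) ≤ Real.logb 2 (p * Z) := by linarith
    positivity
  linarith
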